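/- There exists a universal constant K > 0 such that for every n and every real n×n matrix A satisfying |∑_{i,j} A i j * s i * t j| ≤ 1 for all choices of signs s, t : Fin n → ℝ with |s i| ≤ 1 and |t j| ≤ 1, and for all unit vectors u, v : Fin n → EuclideanSpace ℝ (Fin n), one has |∑_{i,j} A i j * ⟪u i, v j⟫| ≤ K. (Grothendieck's inequality, real case.) -/

import Mathlib

open scoped RealInnerProductSpace

namespace Groth

/-! ### Random signs and moment estimates -/

variable {m : ℕ}

noncomputable def sg (b : Bool) : ℝ := if b then 1 else -1
lemma sg_sq (b : Bool) : sg b * sg b = 1 := by cases b <;> simp [sg]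
lemma sg_not (b : Bool) : sg (!b) = - sg b := by cases b <;> simp [sg]

def flipE (a : Fin m) : (Fin m → Bool) ≃ (Fin m → Bool) where
  toFun ε := Function.update ε a (!(ε a))
  invFun ε := Function.update ε a (!(ε a))
  left_inv ε := by
    funext k
    by_cases h : k = a
    · subst h; simp [Function.update]
    · simp [Function.update, h]
  right_inv ε := by
    funext k
    by_cases h : k = a
    · subst h; simp [Function.update]
    · simp [Function.update, h]

lemma sum_flip (a : Fin m) (G : (Fin m → Bool) → ℝ)
    (hG : ∀ ε b, G (Function.update ε a b) = G ε) :
    ∑ ε : Fin m → Bool, G ε * sg (ε a) = 0 := by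
  have h := Equiv.sum_comp (flipE a) (fun ε => G ε * sg (ε a))
  have h2 : ∀ ε : Fin m → Bool,
      G (flipE a ε) * sg ((flipE a ε) a) = -(G ε * sg (ε a)) := by
    intro ε
    have h1 : (flipE a ε) a = !(ε a) := by simp [flipE]
    rw [h1, sg_not]
    have h3 : G (flipE a ε) = G ε := hG ε (!(ε a))
    rw [h3]; ring
  rw [Finset.sum_congr rfl (fun ε _ => h2 ε)] at h
  rw [Finset.sum_neg_distrib] at h
  linarith

noncomputable def Fs (s : Finset (Fin m)) (w : Fin m → ℝ) (ε : Fin m → Bool) : ℝ :=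
  ∑ k ∈ s, w k * sg (ε k)

lemma Fs_update (s : Finset (Fin m)) (w : Fin m → ℝ) {a : Fin m} (ha : a ∉ s)
    (ε : Fin m → Bool) (b : Bool) : Fs s w (Function.update ε a b) = Fs s w ε := by
  unfold Fs
  refine Finset.sum_congr rfl fun k hk => ?_
  have : k ≠ a := fun h => ha (h ▸ hk)
  rw [Function.update_of_ne this]

lemma card_eps : (Fintype.card (Fin m → Bool) : ℝ) = 2 ^ m := by
  simp [Fintype.card_fun]

lemma sum_Fs_mul (s : Finset (Fin m)) (w w' : Fin m → ℝ) :
    ∑ ε : Fin m → Bool, Fs s w ε * Fs s w' ε = 2 ^ m * ∑ k ∈ s, w k * w' k := by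
  classical
  induction s using Finset.induction_on with
  | empty => simp [Fs]
  | insert a s ha ih =>
    have hins : ∀ (x : Fin m → ℝ) (ε : Fin m → Bool),
        Fs (insert a s) x ε = x a * sg (ε a) + Fs s x ε := by
      intro x ε; unfold Fs; rw [Finset.sum_insert ha]
    have key : ∀ ε : Fin m → Bool,
        Fs (insert a s) w ε * Fs (insert a s) w' ε =
          w a * w' a + (w a * Fs s w' ε + w' a * Fs s w ε) * sg (ε a)
            + Fs s w ε * Fs s w' ε := by
      intro ε
      rw [hins, hins]
      linear_combination (w a * w' a) * sg_sq (ε a)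
    rw [Finset.sum_congr rfl fun ε _ => key ε]
    rw [Finset.sum_add_distrib, Finset.sum_add_distrib]
    rw [sum_flip a _ (fun ε b => by rw [Fs_update s w' ha, Fs_update s w ha])]
    rw [Finset.sum_const, Finset.card_univ, ih, Finset.sum_insert ha,
      nsmul_eq_mul, card_eps]
    ring

lemma sum_Fs_quart (s : Finset (Fin m)) (w : Fin m → ℝ) :
    ∑ ε : Fin m → Bool, (Fs s w ε) ^ 4 ≤ 3 * 2 ^ m * (∑ k ∈ s, w k * w k) ^ 2 := by
  classical
  induction s using Finset.induction_on with
  | empty => simp [Fs]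
  | insert a s ha ih =>
    have hins : ∀ ε : Fin m → Bool,
        Fs (insert a s) w ε = w a * sg (ε a) + Fs s w ε := by
      intro ε; unfold Fs; rw [Finset.sum_insert ha]
    have key : ∀ ε : Fin m → Bool,
        (Fs (insert a s) w ε) ^ 4 =
          w a ^ 4 + 6 * w a ^ 2 * (Fs s w ε * Fs s w ε)
            + (4 * w a ^ 3 * Fs s w ε + 4 * w a * (Fs s w ε) ^ 3) * sg (ε a)
            + (Fs s w ε) ^ 4 := by
      intro ε
      rw [hins]
      linear_combination (w a ^ 4 * (sg (ε a) * sg (ε a) + 1)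
        + 4 * w a ^ 3 * Fs s w ε * sg (ε a)
        + 6 * w a ^ 2 * (Fs s w ε) ^ 2) * sg_sq (ε a)
    have hp : (0:ℝ) < 2 ^ m := by positivity
    have hQ : (0:ℝ) ≤ ∑ k ∈ s, w k * w k :=
      Finset.sum_nonneg fun k _ => mul_self_nonneg _
    calc ∑ ε : Fin m → Bool, (Fs (insert a s) w ε) ^ 4
        = ∑ ε : Fin m → Bool, (w a ^ 4 + 6 * w a ^ 2 * (Fs s w ε * Fs s w ε)
            + (4 * w a ^ 3 * Fs s w ε + 4 * w a * (Fs s w ε) ^ 3) * sg (ε a)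
            + (Fs s w ε) ^ 4) := Finset.sum_congr rfl fun ε _ => key ε
      _ = 2 ^ m * w a ^ 4 + 6 * w a ^ 2 * (2 ^ m * ∑ k ∈ s, w k * w k) + 0
            + ∑ ε : Fin m → Bool, (Fs s w ε) ^ 4 := by
          rw [Finset.sum_add_distrib, Finset.sum_add_distrib, Finset.sum_add_distrib]
          rw [sum_flip a _ (fun ε b => by rw [Fs_update s w ha])]
          rw [Finset.sum_const, Finset.card_univ, ← Finset.mul_sum, sum_Fs_mul,
            nsmul_eq_mul, card_eps]
      _ ≤ 2 ^ m * w a ^ 4 + 6 * w a ^ 2 * (2 ^ m * ∑ k ∈ s, w k * w k) + 0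
            + 3 * 2 ^ m * (∑ k ∈ s, w k * w k) ^ 2 := by linarith
      _ ≤ 3 * 2 ^ m * (∑ k ∈ insert a s, w k * w k) ^ 2 := by
          rw [Finset.sum_insert ha]
          nlinarith [mul_nonneg hp.le (mul_self_nonneg (w a * w a)),
            mul_nonneg (mul_nonneg hp.le hQ) (sq_nonneg (w a)), sq_nonneg (w a)]

/-! ### Euclidean space plumbing -/

lemma inner_euc {ι : Type*} [Fintype ι] (x y : EuclideanSpace ℝ ι) :
    ⟪x, y⟫ = ∑ i, x i * y i := by
  simp [PiLp.inner_apply, RCLike.inner_apply, conj_trivial, mul_comm]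

lemma normsq_euc {ι : Type*} [Fintype ι] (x : EuclideanSpace ℝ ι) :
    ‖x‖ ^ 2 = ∑ i, x i * x i := by
  rw [← real_inner_self_eq_norm_sq, inner_euc]

lemma norm_le_of_sq {E : Type*} [NormedAddCommGroup E] (x : E) (c : ℝ) (hc : 0 ≤ c)
    (h : ‖x‖ ^ 2 ≤ c ^ 2) : ‖x‖ ≤ c := by nlinarith [norm_nonneg x]

/-! ### Truncation -/

noncomputable def T (x : ℝ) : ℝ := max (-7) (min 7 x)

lemma T_abs_le (x : ℝ) : |T x| ≤ 7 := by
  rw [abs_le]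
  constructor
  · exact le_max_left _ _
  · exact max_le (by norm_num) (min_le_left _ _)

lemma Tsq_le (x : ℝ) : T x * T x ≤ x * x := by
  unfold T
  rcases le_total x (-7) with h | h
  · rw [min_eq_right (by linarith), max_eq_left (by linarith)]
    nlinarith
  · rcases le_total 7 x with h2 | h2
    · rw [min_eq_left h2, max_eq_right (by norm_num)]
      nlinarith
    · rw [min_eq_right h2, max_eq_right h]

lemma sub_T_sq (x : ℝ) : (x - T x) * (x - T x) ≤ x ^ 4 / 49 := by
  have key : |x - T x| ≤ x ^ 2 / 7 := by
    unfold T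
    rcases le_total x (-7) with h | h
    · rw [min_eq_right (by linarith), max_eq_left (by linarith)]
      rw [abs_of_nonpos (by linarith)]
      nlinarith [sq_nonneg (x + 7)]
    · rcases le_total 7 x with h2 | h2
      · rw [min_eq_left h2, max_eq_right (by norm_num)]
        rw [abs_of_nonneg (by linarith)]
        nlinarith [sq_nonneg (x - 7)]
      · rw [min_eq_right h2, max_eq_right h]
        simp
        positivity
  have h2 : |x - T x| * |x - T x| ≤ (x ^ 2 / 7) * (x ^ 2 / 7) :=
    mul_le_mul key key (abs_nonneg _) (by positivity)
  rw [abs_mul_abs_self] at h2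
  calc (x - T x) * (x - T x) ≤ (x ^ 2 / 7) * (x ^ 2 / 7) := h2
    _ = x ^ 4 / 49 := by ring

/-! ### The set of bilinear values over all Hilbert spaces -/

noncomputable def Sset (n : ℕ) (A : Fin n → Fin n → ℝ) : Set ℝ :=
  {x | ∃ (m : ℕ) (u v : Fin n → EuclideanSpace ℝ (Fin m)),
    (∀ i, ‖u i‖ ≤ 1) ∧ (∀ j, ‖v j‖ ≤ 1) ∧ x = |∑ i, ∑ j, A i j * ⟪u i, v j⟫|}

lemma zero_mem (n : ℕ) (A : Fin n → Fin n → ℝ) : (0:ℝ) ∈ Sset n A := by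
  refine ⟨0, fun _ => 0, fun _ => 0, fun i => by simp, fun j => by simp, ?_⟩
  simp

lemma absA {n : ℕ} {A : Fin n → Fin n → ℝ}
    (hA : ∀ s t : Fin n → ℝ, (∀ i, |s i| ≤ 1) → (∀ j, |t j| ≤ 1) →
      |∑ i, ∑ j, A i j * s i * t j| ≤ 1) (i : Fin n) (j : Fin n) :
    |A i j| ≤ 1 := by
  have := hA (fun i' => if i' = i then 1 else 0) (fun j' => if j' = j then 1 else 0)
    (fun i' => by split <;> norm_num) (fun j' => by split <;> norm_num)
  simpa [mul_ite, ite_mul, Finset.sum_ite_eq'] using this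

lemma bddAbove_Sset {n : ℕ} {A : Fin n → Fin n → ℝ}
    (hA : ∀ s t : Fin n → ℝ, (∀ i, |s i| ≤ 1) → (∀ j, |t j| ≤ 1) →
      |∑ i, ∑ j, A i j * s i * t j| ≤ 1) :
    BddAbove (Sset n A) := by
  refine ⟨(n : ℝ) * n, ?_⟩
  rintro x ⟨m, u, v, hu, hv, rfl⟩
  calc |∑ i, ∑ j, A i j * ⟪u i, v j⟫|
      ≤ ∑ i, |∑ j, A i j * ⟪u i, v j⟫| := Finset.abs_sum_le_sum_abs _ _
    _ ≤ ∑ i : Fin n, ∑ j : Fin n, |A i j * ⟪u i, v j⟫| :=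
        Finset.sum_le_sum fun i _ => Finset.abs_sum_le_sum_abs _ _
    _ ≤ ∑ i : Fin n, ∑ j : Fin n, (1:ℝ) := by
        refine Finset.sum_le_sum fun i _ => Finset.sum_le_sum fun j _ => ?_
        rw [abs_mul]
        have h1 : |⟪u i, v j⟫| ≤ 1 := by
          calc |⟪u i, v j⟫| ≤ ‖u i‖ * ‖v j‖ := abs_real_inner_le_norm _ _
            _ ≤ 1 := mul_le_one₀ (hu i) (norm_nonneg _) (hv j)
        calc |A i j| * |⟪u i, v j⟫| ≤ 1 * 1 :=
          mul_le_mul (absA hA i j) h1 (abs_nonneg _) zero_le_one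
          _ = 1 := by norm_num
    _ = (n : ℝ) * n := by simp [mul_comm]

set_option maxHeartbeats 2000000 in
lemma step {n : ℕ} {A : Fin n → Fin n → ℝ}
    (hA : ∀ s t : Fin n → ℝ, (∀ i, |s i| ≤ 1) → (∀ j, |t j| ≤ 1) →
      |∑ i, ∑ j, A i j * s i * t j| ≤ 1)
    (x : ℝ) (hx : x ∈ Sset n A) :
    x ≤ 49 + (Real.sqrt 3 / 7) * 2 * sSup (Sset n A) := by
  obtain ⟨m, u, v, hu, hv, rfl⟩ := hx
  set G := sSup (Sset n A) with hG
  have hG0 : 0 ≤ G := le_csSup (bddAbove_Sset hA) (zero_mem n A)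
  -- abbreviations
  set d : ℝ := 2 ^ m with hd'
  have hd : (0:ℝ) < d := by positivity
  set r : ℝ := Real.sqrt d with hr'
  have hr : 0 < r := Real.sqrt_pos.mpr hd
  have hr2 : r * r = d := Real.mul_self_sqrt hd.le
  set fu : Fin n → (Fin m → Bool) → ℝ := fun i ε => Fs Finset.univ (u i) ε with hfu
  set gv : Fin n → (Fin m → Bool) → ℝ := fun j ε => Fs Finset.univ (v j) ε with hgv
  -- vectors in the big Euclidean space
  set P : Fin n → EuclideanSpace ℝ (Fin m → Bool) :=
    fun i => WithLp.toLp 2 (fun ε => (fu i ε - T (fu i ε)) / r) with hP'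
  set Q : Fin n → EuclideanSpace ℝ (Fin m → Bool) :=
    fun j => WithLp.toLp 2 (fun ε => T (gv j ε) / r) with hQ'
  set U : Fin n → EuclideanSpace ℝ (Fin m → Bool) :=
    fun i => WithLp.toLp 2 (fun ε => fu i ε / r) with hU'
  set R : Fin n → EuclideanSpace ℝ (Fin m → Bool) :=
    fun j => WithLp.toLp 2 (fun ε => (gv j ε - T (gv j ε)) / r) with hR'
  -- second moments
  have husq : ∀ i, ∑ ε : Fin m → Bool, fu i ε * fu i ε = d * ‖u i‖ ^ 2 := by
    intro i; rw [hfu]; dsimp only; rw [sum_Fs_mul, normsq_euc]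
  have hvsq : ∀ j, ∑ ε : Fin m → Bool, gv j ε * gv j ε = d * ‖v j‖ ^ 2 := by
    intro j; rw [hgv]; dsimp only; rw [sum_Fs_mul, normsq_euc]
  have huq : ∀ i, ∑ ε : Fin m → Bool, (fu i ε) ^ 4 ≤ 3 * d := by
    intro i
    calc ∑ ε : Fin m → Bool, (fu i ε) ^ 4
        ≤ 3 * 2 ^ m * (∑ k, u i k * u i k) ^ 2 := sum_Fs_quart _ _
      _ = 3 * d * (‖u i‖ ^ 2) ^ 2 := by rw [← normsq_euc, hd']
      _ ≤ 3 * d * 1 := by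
          have ha := hu i; have hb := norm_nonneg (u i)
          have h2 : ‖u i‖ ^ 2 ≤ 1 := by nlinarith
          have h3 : (0:ℝ) ≤ ‖u i‖ ^ 2 := sq_nonneg _
          have h1 : (‖u i‖ ^ 2) ^ 2 ≤ 1 := by nlinarith
          nlinarith
      _ = 3 * d := by ring
  have hvq : ∀ j, ∑ ε : Fin m → Bool, (gv j ε) ^ 4 ≤ 3 * d := by
    intro j
    calc ∑ ε : Fin m → Bool, (gv j ε) ^ 4
        ≤ 3 * 2 ^ m * (∑ k, v j k * v j k) ^ 2 := sum_Fs_quart _ _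
      _ = 3 * d * (‖v j‖ ^ 2) ^ 2 := by rw [← normsq_euc, hd']
      _ ≤ 3 * d * 1 := by
          have ha := hv j; have hb := norm_nonneg (v j)
          have h2 : ‖v j‖ ^ 2 ≤ 1 := by nlinarith
          have h3 : (0:ℝ) ≤ ‖v j‖ ^ 2 := sq_nonneg _
          have h1 : (‖v j‖ ^ 2) ^ 2 ≤ 1 := by nlinarith
          nlinarith
      _ = 3 * d := by ring
  -- norm bounds on the vectors
  have div_sq : ∀ a : ℝ, (a / r) * (a / r) = a * a / d := by
    intro a; rw [div_mul_div_comm, hr2]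
  have hUnorm : ∀ i, ‖U i‖ ≤ 1 := by
    intro i
    refine norm_le_of_sq _ 1 zero_le_one ?_
    rw [normsq_euc, one_pow]
    calc ∑ ε : Fin m → Bool, U i ε * U i ε
        = ∑ ε : Fin m → Bool, fu i ε * fu i ε / d :=
          Finset.sum_congr rfl fun ε _ => div_sq _
      _ = (∑ ε : Fin m → Bool, fu i ε * fu i ε) / d := by rw [Finset.sum_div]
      _ = ‖u i‖ ^ 2 := by rw [husq i]; field_simp
      _ ≤ 1 := by have := hu i; have := norm_nonneg (u i); nlinarith
  have hQnorm : ∀ j, ‖Q j‖ ≤ 1 := by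
    intro j
    refine norm_le_of_sq _ 1 zero_le_one ?_
    rw [normsq_euc, one_pow]
    calc ∑ ε : Fin m → Bool, Q j ε * Q j ε
        = ∑ ε : Fin m → Bool, T (gv j ε) * T (gv j ε) / d :=
          Finset.sum_congr rfl fun ε _ => div_sq _
      _ ≤ ∑ ε : Fin m → Bool, gv j ε * gv j ε / d :=
          Finset.sum_le_sum fun ε _ => by gcongr ?_ / d; exact Tsq_le _
      _ = (∑ ε : Fin m → Bool, gv j ε * gv j ε) / d := by rw [Finset.sum_div]
      _ = ‖v j‖ ^ 2 := by rw [hvsq j]; field_simp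
      _ ≤ 1 := by have := hv j; have := norm_nonneg (v j); nlinarith
  -- small norm of residuals
  set c : ℝ := Real.sqrt 3 / 7 with hc'
  have hc : 0 < c := by positivity
  have hcsq : c ^ 2 = 3 / 49 := by
    rw [hc', div_pow, Real.sq_sqrt (by norm_num : (0:ℝ) ≤ 3)]
    norm_num
  have hPnorm : ∀ i, ‖P i‖ ≤ c := by
    intro i
    refine norm_le_of_sq _ c hc.le ?_
    rw [normsq_euc, hcsq]
    calc ∑ ε : Fin m → Bool, P i ε * P i ε
        = ∑ ε : Fin m → Bool, (fu i ε - T (fu i ε)) * (fu i ε - T (fu i ε)) / d :=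
          Finset.sum_congr rfl fun ε _ => div_sq _
      _ ≤ ∑ ε : Fin m → Bool, (fu i ε) ^ 4 / 49 / d :=
          Finset.sum_le_sum fun ε _ => by gcongr ?_ / d; exact sub_T_sq _
      _ = (∑ ε : Fin m → Bool, (fu i ε) ^ 4) / 49 / d := by
          rw [Finset.sum_div, Finset.sum_div]
      _ ≤ 3 * d / 49 / d := by gcongr ?_ / 49 / d; exact huq i
      _ = 3 / 49 := by
          rw [div_div, mul_comm (49:ℝ) d, ← div_div, mul_div_assoc, div_self hd.ne', mul_one]
  have hRnorm : ∀ j, ‖R j‖ ≤ c := by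
    intro j
    refine norm_le_of_sq _ c hc.le ?_
    rw [normsq_euc, hcsq]
    calc ∑ ε : Fin m → Bool, R j ε * R j ε
        = ∑ ε : Fin m → Bool, (gv j ε - T (gv j ε)) * (gv j ε - T (gv j ε)) / d :=
          Finset.sum_congr rfl fun ε _ => div_sq _
      _ ≤ ∑ ε : Fin m → Bool, (gv j ε) ^ 4 / 49 / d :=
          Finset.sum_le_sum fun ε _ => by gcongr ?_ / d; exact sub_T_sq _
      _ = (∑ ε : Fin m → Bool, (gv j ε) ^ 4) / 49 / d := by
          rw [Finset.sum_div, Finset.sum_div]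
      _ ≤ 3 * d / 49 / d := by gcongr ?_ / 49 / d; exact hvq j
      _ = 3 / 49 := by
          rw [div_div, mul_comm (49:ℝ) d, ← div_div, mul_div_assoc, div_self hd.ne', mul_one]
  -- inner product identities
  have hdivmul : ∀ a b : ℝ, (a / r) * (b / r) = a * b / d := by
    intro a b; rw [div_mul_div_comm, hr2]
  have hPQ : ∀ i j, ⟪P i, Q j⟫ =
      (∑ ε : Fin m → Bool, (fu i ε - T (fu i ε)) * T (gv j ε)) / d := by
    intro i j
    rw [inner_euc, Finset.sum_div]
    exact Finset.sum_congr rfl fun ε _ => hdivmul _ _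
  have hUR : ∀ i j, ⟪U i, R j⟫ =
      (∑ ε : Fin m → Bool, fu i ε * (gv j ε - T (gv j ε))) / d := by
    intro i j
    rw [inner_euc, Finset.sum_div]
    exact Finset.sum_congr rfl fun ε _ => hdivmul _ _
  have hUV : ∀ i j, ⟪u i, v j⟫ = (∑ ε : Fin m → Bool, fu i ε * gv j ε) / d := by
    intro i j
    rw [inner_euc]
    rw [hfu, hgv]; dsimp only
    rw [sum_Fs_mul, hd']
    field_simp
  -- the decomposition
  have hdec : ∀ i j, ⟪u i, v j⟫ =
      (∑ ε : Fin m → Bool, T (fu i ε) * T (gv j ε)) / d + ⟪P i, Q j⟫ + ⟪U i, R j⟫ := by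
    intro i j
    rw [hUV, hPQ, hUR, ← add_div, ← add_div]
    congr 1
    rw [← Finset.sum_add_distrib, ← Finset.sum_add_distrib]
    exact Finset.sum_congr rfl fun ε _ => by ring
  have hsplit : ∑ i, ∑ j, A i j * ⟪u i, v j⟫ =
      (∑ i, ∑ j, A i j * ((∑ ε : Fin m → Bool, T (fu i ε) * T (gv j ε)) / d))
      + (∑ i, ∑ j, A i j * ⟪P i, Q j⟫)
      + (∑ i, ∑ j, A i j * ⟪U i, R j⟫) := by
    rw [← Finset.sum_add_distrib, ← Finset.sum_add_distrib]
    refine Finset.sum_congr rfl fun i _ => ?_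
    rw [← Finset.sum_add_distrib, ← Finset.sum_add_distrib]
    refine Finset.sum_congr rfl fun j _ => ?_
    rw [hdec]; ring
  -- bound on the truncated term
  have hT1 : |∑ i, ∑ j, A i j * ((∑ ε : Fin m → Bool, T (fu i ε) * T (gv j ε)) / d)| ≤ 49 := by
    have hswap : ∑ i, ∑ j, A i j * ((∑ ε : Fin m → Bool, T (fu i ε) * T (gv j ε)) / d)
        = (∑ ε : Fin m → Bool, ∑ i, ∑ j, A i j * (T (fu i ε) * T (gv j ε))) / d := by
      have h1 : ∀ i j, A i j * ((∑ ε : Fin m → Bool, T (fu i ε) * T (gv j ε)) / d)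
          = ∑ ε : Fin m → Bool, A i j * (T (fu i ε) * T (gv j ε)) / d := by
        intro i j
        rw [mul_div_assoc', Finset.mul_sum, Finset.sum_div]
      calc ∑ i, ∑ j, A i j * ((∑ ε : Fin m → Bool, T (fu i ε) * T (gv j ε)) / d)
          = ∑ i, ∑ j, ∑ ε : Fin m → Bool, A i j * (T (fu i ε) * T (gv j ε)) / d :=
            Finset.sum_congr rfl fun i _ => Finset.sum_congr rfl fun j _ => h1 i j
        _ = ∑ i, ∑ ε : Fin m → Bool, ∑ j, A i j * (T (fu i ε) * T (gv j ε)) / d :=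
            Finset.sum_congr rfl fun i _ => Finset.sum_comm
        _ = ∑ ε : Fin m → Bool, ∑ i, ∑ j, A i j * (T (fu i ε) * T (gv j ε)) / d :=
            Finset.sum_comm
        _ = (∑ ε : Fin m → Bool, ∑ i, ∑ j, A i j * (T (fu i ε) * T (gv j ε))) / d := by
            rw [Finset.sum_div]
            refine Finset.sum_congr rfl fun ε _ => ?_
            rw [Finset.sum_div]
            refine Finset.sum_congr rfl fun i _ => ?_
            rw [Finset.sum_div]
    rw [hswap, abs_div, abs_of_pos hd, div_le_iff₀ hd]
    calc |∑ ε : Fin m → Bool, ∑ i, ∑ j, A i j * (T (fu i ε) * T (gv j ε))|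
        ≤ ∑ ε : Fin m → Bool, |∑ i, ∑ j, A i j * (T (fu i ε) * T (gv j ε))| :=
          Finset.abs_sum_le_sum_abs _ _
      _ ≤ ∑ _ε : Fin m → Bool, (49:ℝ) := by
          refine Finset.sum_le_sum fun ε _ => ?_
          have happ := hA (fun i => T (fu i ε) / 7) (fun j => T (gv j ε) / 7)
            (fun i => by rw [abs_div]; rw [abs_of_pos (by norm_num : (0:ℝ) < 7)]; exact div_le_one_of_le₀ (T_abs_le _) (by norm_num))
            (fun j => by rw [abs_div]; rw [abs_of_pos (by norm_num : (0:ℝ) < 7)]; exact div_le_one_of_le₀ (T_abs_le _) (by norm_num))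
          have heq : ∑ i, ∑ j, A i j * (T (fu i ε) / 7) * (T (gv j ε) / 7)
              = (∑ i, ∑ j, A i j * (T (fu i ε) * T (gv j ε))) / 49 := by
            rw [Finset.sum_div]
            refine Finset.sum_congr rfl fun i _ => ?_
            rw [Finset.sum_div]
            exact Finset.sum_congr rfl fun j _ => by ring
          rw [heq, abs_div, abs_of_pos (by norm_num : (0:ℝ) < 49), div_le_one (by norm_num)] at happ
          linarith
      _ = 49 * d := by
          rw [Finset.sum_const, Finset.card_univ, nsmul_eq_mul, card_eps, ← hd']
          ring
  -- bound residual bilinear terms via the sup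
  have hmem_le : ∀ (p q : Fin n → EuclideanSpace ℝ (Fin m → Bool)),
      (∀ i, ‖p i‖ ≤ 1) → (∀ j, ‖q j‖ ≤ 1) →
      |∑ i, ∑ j, A i j * ⟪p i, q j⟫| ≤ G := by
    intro p q hp hq
    have e := (stdOrthonormalBasis ℝ (EuclideanSpace ℝ (Fin m → Bool))).repr
    refine le_csSup (bddAbove_Sset hA) ?_
    refine ⟨Module.finrank ℝ (EuclideanSpace ℝ (Fin m → Bool)),
      fun i => e (p i), fun j => e (q j),
      fun i => by rw [e.norm_map]; exact hp i,
      fun j => by rw [e.norm_map]; exact hq j, ?_⟩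
    congr 1
    refine Finset.sum_congr rfl fun i _ => Finset.sum_congr rfl fun j _ => ?_
    rw [e.inner_map_map]
  -- P = c • P' etc.
  have hres : ∀ (p q : Fin n → EuclideanSpace ℝ (Fin m → Bool)),
      (∀ i, ‖p i‖ ≤ c) → (∀ j, ‖q j‖ ≤ 1) →
      |∑ i, ∑ j, A i j * ⟪p i, q j⟫| ≤ c * G := by
    intro p q hp hq
    set p' : Fin n → EuclideanSpace ℝ (Fin m → Bool) := fun i => c⁻¹ • p i with hp'
    have hp'norm : ∀ i, ‖p' i‖ ≤ 1 := by
      intro i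
      rw [hp']; dsimp only
      rw [norm_smul, norm_inv, Real.norm_eq_abs, abs_of_pos hc]
      calc c⁻¹ * ‖p i‖ ≤ c⁻¹ * c := by gcongr; exact hp i
        _ = 1 := inv_mul_cancel₀ hc.ne'
    have hkey : ∑ i, ∑ j, A i j * ⟪p i, q j⟫ = c * ∑ i, ∑ j, A i j * ⟪p' i, q j⟫ := by
      rw [Finset.mul_sum]
      refine Finset.sum_congr rfl fun i _ => ?_
      rw [Finset.mul_sum]
      refine Finset.sum_congr rfl fun j _ => ?_
      have : ⟪p' i, q j⟫ = c⁻¹ * ⟪p i, q j⟫ := by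
        rw [hp']; dsimp only; rw [real_inner_smul_left]
      rw [this]
      field_simp
    rw [hkey, abs_mul, abs_of_pos hc]
    exact mul_le_mul_of_nonneg_left (hmem_le p' q hp'norm hq) hc.le
  -- symmetric version with the second family small
  have hres' : ∀ (p q : Fin n → EuclideanSpace ℝ (Fin m → Bool)),
      (∀ i, ‖p i‖ ≤ 1) → (∀ j, ‖q j‖ ≤ c) →
      |∑ i, ∑ j, A i j * ⟪p i, q j⟫| ≤ c * G := by
    intro p q hp hq
    set q' : Fin n → EuclideanSpace ℝ (Fin m → Bool) := fun j => c⁻¹ • q j with hq'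
    have hq'norm : ∀ j, ‖q' j‖ ≤ 1 := by
      intro j
      rw [hq']; dsimp only
      rw [norm_smul, norm_inv, Real.norm_eq_abs, abs_of_pos hc]
      calc c⁻¹ * ‖q j‖ ≤ c⁻¹ * c := by gcongr; exact hq j
        _ = 1 := inv_mul_cancel₀ hc.ne'
    have hkey : ∑ i, ∑ j, A i j * ⟪p i, q j⟫ = c * ∑ i, ∑ j, A i j * ⟪p i, q' j⟫ := by
      rw [Finset.mul_sum]
      refine Finset.sum_congr rfl fun i _ => ?_
      rw [Finset.mul_sum]
      refine Finset.sum_congr rfl fun j _ => ?_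
      have : ⟪p i, q' j⟫ = c⁻¹ * ⟪p i, q j⟫ := by
        rw [hq']; dsimp only; rw [real_inner_smul_right]
      rw [this]
      field_simp
    rw [hkey, abs_mul, abs_of_pos hc]
    exact mul_le_mul_of_nonneg_left (hmem_le p q' hp hq'norm) hc.le
  -- put it together
  calc |∑ i, ∑ j, A i j * ⟪u i, v j⟫|
      ≤ |∑ i, ∑ j, A i j * ((∑ ε : Fin m → Bool, T (fu i ε) * T (gv j ε)) / d)|
        + |∑ i, ∑ j, A i j * ⟪P i, Q j⟫| + |∑ i, ∑ j, A i j * ⟪U i, R j⟫| := by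
        rw [hsplit]
        exact (abs_add_le _ _).trans (by gcongr; exact abs_add_le _ _)
    _ ≤ 49 + c * G + c * G :=
        add_le_add (add_le_add hT1 (hres P Q hPnorm hQnorm)) (hres' U R hUnorm hRnorm)
    _ = 49 + c * 2 * G := by ring


lemma sSup_le_98 {n : ℕ} {A : Fin n → Fin n → ℝ}
    (hA : ∀ s t : Fin n → ℝ, (∀ i, |s i| ≤ 1) → (∀ j, |t j| ≤ 1) →
      |∑ i, ∑ j, A i j * s i * t j| ≤ 1) :
    sSup (Sset n A) ≤ 98 := by
  have hbdd := bddAbove_Sset hA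
  have hne : (Sset n A).Nonempty := ⟨0, zero_mem n A⟩
  have h1 : sSup (Sset n A) ≤ 49 + (Real.sqrt 3 / 7) * 2 * sSup (Sset n A) :=
    csSup_le hne (fun x hx => step hA x hx)
  have hG0 : 0 ≤ sSup (Sset n A) := le_csSup hbdd (zero_mem n A)
  have hs : Real.sqrt 3 ≤ 7 / 4 := by
    rw [show (7:ℝ) / 4 = Real.sqrt ((7 / 4) ^ 2) from (Real.sqrt_sq (by norm_num)).symm]
    exact Real.sqrt_le_sqrt (by norm_num)
  nlinarith [Real.sqrt_nonneg 3]

end Groth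

theorem grothendieck_inequality_real :
    ∃ K : ℝ, 0 < K ∧ ∀ (n : ℕ) (A : Fin n → Fin n → ℝ),
      (∀ s t : Fin n → ℝ, (∀ i, |s i| ≤ 1) → (∀ j, |t j| ≤ 1) →
        |∑ i, ∑ j, A i j * s i * t j| ≤ 1) →
      ∀ u v : Fin n → EuclideanSpace ℝ (Fin n),
        (∀ i, ‖u i‖ = 1) → (∀ j, ‖v j‖ = 1) →
        |∑ i, ∑ j, A i j * ⟪u i, v j⟫| ≤ K := by
  refine ⟨98, by norm_num, fun n A hA u v hu hv => ?_⟩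
  have hmem : |∑ i, ∑ j, A i j * ⟪u i, v j⟫| ∈ Groth.Sset n A :=
    ⟨n, u, v, fun i => (hu i).le, fun j => (hv j).le, rfl⟩
  exact (le_csSup (Groth.bddAbove_Sset hA) hmem).trans (Groth.sSup_le_98 hA)
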